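/- If α and β are injective partial maps on {1,...,n} with |Dom(α)| = |Dom(β)| = n-1 and the composite αβ also has rank n-1, then the completion of αβ equals the product of the completions of α and β. -/

import Mathlib

/-- Partial transformations on `Fin n`, represented as `Option`-valued maps. -/
abbrev PT (n : ℕ) := Fin n → Option (Fin n)

/-- Left-to-right composition of partial maps: `x (pcomp f g) = (x f) g`. -/
def pcomp {n : ℕ} (f g : PT n) : PT n := fun x => (f x).bind g

/-- The identity partial map. -/
def pid (n : ℕ) : PT n := fun x => some x

instance PTMonoid (n : ℕ) : Monoid (PT n) where
  mul := pcomp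
  one := pid n
  mul_assoc f g h := funext fun x => by
    show ((f x).bind g).bind h = (f x).bind fun y => (g y).bind h
    cases f x <;> rfl
  one_mul f := rfl
  mul_one f := funext fun x => by
    show (f x).bind (fun y => some y) = f x
    cases f x <;> rfl

/-- `f` is injective on its domain. -/
def pInj {n : ℕ} (f : PT n) : Prop := ∀ x y a, f x = some a → f y = some a → x = y

/-- The domain of a partial map. -/
def pDom {n : ℕ} (f : PT n) : Finset (Fin n) := Finset.univ.filter fun x => (f x).isSome

/-- The image of a partial map. -/
def pIm {n : ℕ} (f : PT n) : Finset (Fin n) := Finset.univ.filter fun b => ∃ x, f x = some b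

/-- The rank of a partial map is the size of its domain. -/
def prank {n : ℕ} (f : PT n) : ℕ := (pDom f).card

/-- Order-preserving partial maps. -/
def orderPres {n : ℕ} (f : PT n) : Prop :=
  ∀ x y a b, f x = some a → f y = some b → x ≤ y → a ≤ b

/-- Order-reversing partial maps. -/
def orderRev {n : ℕ} (f : PT n) : Prop :=
  ∀ x y a b, f x = some a → f y = some b → x ≤ y → b ≤ a

/-- Monotone partial maps. -/
def isMonotonePT {n : ℕ} (f : PT n) : Prop := orderPres f ∨ orderRev f

/-- The permutation `σ` extends the partial map `f`. -/
def extendsTo {n : ℕ} (σ : Equiv.Perm (Fin n)) (f : PT n) : Prop :=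
  ∀ x a, f x = some a → σ x = a

/-- Membership in the alternating inverse monoid `AI_n`: an injective partial map of
rank `≤ n - 2`, or one that extends to an even permutation. -/
def inAI {n : ℕ} (f : PT n) : Prop :=
  pInj f ∧ (prank f + 2 ≤ n ∨
    ∃ σ : Equiv.Perm (Fin n), σ ∈ alternatingGroup (Fin n) ∧ extendsTo σ f)

/-- `AO_n = AI_n ∩ POI_n`. -/
def AO (n : ℕ) : Set (PT n) := {f | orderPres f ∧ inAI f}

/-- `AM_n = AI_n ∩ PMI_n`. -/
def AM (n : ℕ) : Set (PT n) := {f | isMonotonePT f ∧ inAI f}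

/-- Green's `J`-relation relative to a submonoid-like subset `S` (containing the identity):
`a J b` iff each lies in the two-sided principal ideal of the other. -/
def JRelIn {n : ℕ} (S : Set (PT n)) (a b : PT n) : Prop :=
  (∃ u v, u ∈ S ∧ v ∈ S ∧ a = u * b * v) ∧ (∃ u v, u ∈ S ∧ v ∈ S ∧ b = u * a * v)

/-- Two permutations agreeing away from a single point are equal. -/
lemma perm_eq_off_point {α : Type*} [DecidableEq α] (π₁ π₂ : Equiv.Perm α) (x₀ : α)
    (h : ∀ x, x ≠ x₀ → π₁ x = π₂ x) : π₁ = π₂ := by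
  have key : ∀ x, x ≠ x₀ → (π₁.trans π₂.symm) x = x := by
    intro x hx
    simp [Equiv.trans_apply, h x hx]
  have h0 : (π₁.trans π₂.symm) x₀ = x₀ := by
    by_contra hne
    have := key _ hne
    exact hne ((π₁.trans π₂.symm).injective this)
  ext x
  rcases eq_or_ne x x₀ with rfl | hx
  · have := h0
    simpa [Equiv.trans_apply, Equiv.symm_apply_eq] using this
  · exact h x hx

/-- the completion of a rank-`n-1` composite is the composite of completions. -/
theorem stmt4 {n : ℕ} (hn : 2 ≤ n) (a b : PT n) (hinja : pInj a) (hinjb : pInj b)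
    (hra : prank a = n - 1) (hrb : prank b = n - 1) (hrab : prank (a * b) = n - 1)
    (σ τ ρ : Equiv.Perm (Fin n)) (hσ : extendsTo σ a) (hτ : extendsTo τ b)
    (hρ : extendsTo ρ (a * b)) : ρ = σ.trans τ := by
  -- the complement of the domain of `a*b` is a single point
  have hcompl : (pDom (a * b))ᶜ.card = 1 := by
    have hcard : (pDom (a * b)).card + (pDom (a * b))ᶜ.card = n := by
      simp [Finset.card_add_card_compl]
    have h := hrab
    unfold prank at h
    omega
  obtain ⟨x₀, hx₀⟩ := Finset.card_eq_one.mp hcompl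
  refine perm_eq_off_point ρ (σ.trans τ) x₀ ?_
  intro x hx
  have hxmem : x ∈ pDom (a * b) := by
    by_contra hmem
    have : x ∈ (pDom (a * b))ᶜ := Finset.mem_compl.mpr hmem
    rw [hx₀] at this
    exact hx (Finset.mem_singleton.mp this)
  have hsome : ((a * b) x).isSome := by
    simpa [pDom] using hxmem
  obtain ⟨c, hc⟩ := Option.isSome_iff_exists.mp hsome
  have hab : (a x).bind b = some c := hc
  obtain ⟨y, hy, hby⟩ := Option.bind_eq_some_iff.mp hab
  have h1 : ρ x = c := hρ x c hc
  have h2 : σ x = y := hσ x y hy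
  have h3 : τ y = c := hτ y c hby
  simp [Equiv.trans_apply, h1, h2, h3]
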